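/- There exists a 2-iterated pushdown automaton with input alphabet {o, h, c, t} that accepts a word u if and only if u = (ψ(τ^k(O)))^8 for some natural number k; these are exactly the contour words of the balls of the dodecagrid, the tiling {5,3,4} of hyperbolic 3-space, which splits into 8 sectors around its central point, each spanned by the tree generated from a root labelled O by the rules τ. -/

import Mathlib

/-- Operations on a 2-level iterated pushdown store. -/
inductive Op (Γ : Type*) where
  | pop1 : Op Γ
  | pop2 : Op Γ
  | push1 : List Γ → Op Γ
  | push2 : List Γ → Op Γ

/-- A 2-level pushdown store: a finite list of entries `(A, s)` with `A` a letter of `Γ`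
and `s ∈ Γ*` the inner store of the entry. -/
abbrev Store (Γ : Type*) := List (Γ × List Γ)

/-- The top symbols of a 2-level store: the letter of the top entry followed by the first
letter of its inner store when that inner store is nonempty; an element of `Γ ∪ Γ²`. -/
def topsym {Γ : Type*} : Store Γ → List Γ
  | [] => []
  | (A, s) :: _ => A :: s.take 1

/-- Apply an operation to a 2-level store (a partial operation):
`pop1` removes the top entry; `pop2` removes the first letter of the inner store of the
top entry (when nonempty); `push1 w` replaces the top entry `(A, s)` by the entries
`(w_1, s), …, (w_m, s)`; `push2 u` replaces the top entry `(A, s)` by `(A, u ++ s)`. -/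
def applyOp {Γ : Type*} : Op Γ → Store Γ → Option (Store Γ)
  | .pop1, _ :: rest => some rest
  | .pop2, (A, _ :: s) :: rest => some ((A, s) :: rest)
  | .push1 w, (_, s) :: rest => some (w.map (fun x => (x, s)) ++ rest)
  | .push2 u, (A, s) :: rest => some ((A, u ++ s) :: rest)
  | _, _ => none

/-- A 2-iterated pushdown automaton with state set `Q`, input alphabet `In` and store
alphabet `Γ`: an initial state `q0`, an initial store symbol `Z`, and a transition table
`δ` assigning to each triple `(q, a, t)` — with `a ∈ In ∪ {ε}` and `t ∈ Γ ∪ Γ²` — a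
finite set (list) of instructions `(q', op)`. -/
structure IPDA2 (Q In Γ : Type*) where
  q0 : Q
  Z : Γ
  δ : Q → Option In → List Γ → List (Q × Op Γ)

/-- A configuration: current state, remaining input word, current 2-level store. -/
abbrev Config (Q In Γ : Type*) := Q × List In × Store Γ

/-- One computation step: an instruction from `δ(q, a, topsym ω)` may be applied, where
`a = ε` (no input consumed) or `a` is the first letter of the remaining input (which is
then consumed); the state changes to `q'` and the operation is applied to the store. -/
inductive IPDA2.Step {Q In Γ : Type*} (M : IPDA2 Q In Γ) :
    Config Q In Γ → Config Q In Γ → Prop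
  | eps {q q' : Q} {w : List In} {ω ω' : Store Γ} {op : Op Γ} :
      (q', op) ∈ M.δ q none (topsym ω) → applyOp op ω = some ω' →
      M.Step (q, w, ω) (q', w, ω')
  | read {q q' : Q} {a : In} {w : List In} {ω ω' : Store Γ} {op : Op Γ} :
      (q', op) ∈ M.δ q (some a) (topsym ω) → applyOp op ω = some ω' →
      M.Step (q, a :: w, ω) (q', w, ω')

/-- A finite sequence of computation steps. -/
def IPDA2.Steps {Q In Γ : Type*} (M : IPDA2 Q In Γ) :
    Config Q In Γ → Config Q In Γ → Prop :=
  Relation.ReflTransGen M.Step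

/-- Acceptance: some finite sequence of steps leads from the initial configuration
`(q0, w, [(Z, ε)])` to a configuration with empty remaining input and empty store. -/
def IPDA2.Accepts {Q In Γ : Type*} (M : IPDA2 Q In Γ) (w : List In) : Prop :=
  ∃ q : Q, M.Steps (M.q0, w, [(M.Z, [])]) (q, [], [])

/-- The four-letter alphabet `{O, H, C, T}` of node labels of the dodecagrid trees. -/
inductive OHCT where
  | O : OHCT
  | H : OHCT
  | C : OHCT
  | T : OHCT
  deriving DecidableEq

/-- The substitution `τ` determined by `τ(O) = O⁵C³T`, `τ(H) = O⁴C³T`, `τ(C) = O³C³T`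
and `τ(T) = O²HC²T`, on letters. -/
def tauLetter : OHCT → List OHCT
  | .O => [.O, .O, .O, .O, .O, .C, .C, .C, .T]
  | .H => [.O, .O, .O, .O, .C, .C, .C, .T]
  | .C => [.O, .O, .O, .C, .C, .C, .T]
  | .T => [.O, .O, .H, .C, .C, .T]

/-- The substitution `τ` extended to words (monoid morphism of words). -/
def tauWord (w : List OHCT) : List OHCT := w.flatMap tauLetter

/-- The four-letter input alphabet `{o, h, c, t}`. -/
inductive ohct where
  | o : ohct
  | h : ohct
  | c : ohct
  | t : ohct
  deriving DecidableEq

/-- The letter renaming `ψ : O ↦ o, H ↦ h, C ↦ c, T ↦ t`. -/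
def psi : OHCT → ohct
  | .O => .o
  | .H => .h
  | .C => .c
  | .T => .t


section DodecaAux

/-- Store alphabet: bottom symbol, counter symbol, and the four letters. -/
inductive Gam where
  | Z : Gam
  | I : Gam
  | Lo : Gam
  | Lh : Gam
  | Lc : Gam
  | Lt : Gam
  deriving DecidableEq

instance : Fintype Gam :=
  ⟨{.Z, .I, .Lo, .Lh, .Lc, .Lt}, by intro x; cases x <;> simp⟩

/-- Embedding of the node labels into the store alphabet. -/
def liftG : OHCT → Gam
  | .O => .Lo
  | .H => .Lh
  | .C => .Lc
  | .T => .Lt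

/-- Back from store letters to words over the node labels. -/
def goutG : Gam → List OHCT
  | .Lo => [.O]
  | .Lh => [.H]
  | .Lc => [.C]
  | .Lt => [.T]
  | _ => []

instance : Fintype OHCT :=
  ⟨{.O, .H, .C, .T}, by intro x; cases x <;> simp⟩

/-- States of the automaton. -/
inductive St where
  | count : St
  | go : St
  | go2 : OHCT → St
  deriving DecidableEq, Fintype

/-- The transition table. -/
def deltaD : St → Option ohct → List Gam → List (St × Op Gam)
  | .count, none, [.Z] =>
      [(.count, .push2 [.I]), (.go, .push1 (List.replicate 8 .Lo))]
  | .count, none, [.Z, .I] =>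
      [(.count, .push2 [.I]), (.go, .push1 (List.replicate 8 .Lo))]
  | .go, none, [.Lo, .I] => [(.go2 .O, .pop2)]
  | .go, none, [.Lh, .I] => [(.go2 .H, .pop2)]
  | .go, none, [.Lc, .I] => [(.go2 .C, .pop2)]
  | .go, none, [.Lt, .I] => [(.go2 .T, .pop2)]
  | .go, some .o, [.Lo] => [(.go, .pop1)]
  | .go, some .h, [.Lh] => [(.go, .pop1)]
  | .go, some .c, [.Lc] => [(.go, .pop1)]
  | .go, some .t, [.Lt] => [(.go, .pop1)]
  | .go2 A, none, _ => [(.go, .push1 ((tauLetter A).map liftG))]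
  | _, _, _ => []

/-- The automaton. -/
def MD : IPDA2 St ohct Gam := ⟨.count, .Z, deltaD⟩

@[simp] lemma topsym_nil : topsym ([] : Store Gam) = [] := rfl
@[simp] lemma topsym_cons_nil (A : Gam) (rest : Store Gam) :
    topsym ((A, ([] : List Gam)) :: rest) = [A] := rfl
@[simp] lemma topsym_cons_cons (A x : Gam) (s : List Gam) (rest : Store Gam) :
    topsym ((A, x :: s) :: rest) = [A, x] := rfl

lemma delta_go2_none (A : OHCT) (t : List Gam) :
    deltaD (.go2 A) none t = [(.go, .push1 ((tauLetter A).map liftG))] := by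
  rcases t with _ | ⟨x, t⟩
  · rfl
  rcases t with _ | ⟨y, t⟩
  · cases x <;> rfl
  · cases x <;> cases y <;> rfl

lemma delta_go2_some (A : OHCT) (a : ohct) (t : List Gam) :
    deltaD (.go2 A) (some a) t = [] := by
  rcases t with _ | ⟨x, t⟩
  · rfl
  rcases t with _ | ⟨y, t⟩
  · cases x <;> rfl
  · cases x <;> cases y <;> rfl

lemma delta_count_some (a : ohct) (t : List Gam) :
    deltaD .count (some a) t = [] := by
  rcases t with _ | ⟨x, t⟩
  · rfl
  rcases t with _ | ⟨y, t⟩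
  · cases x <;> rfl
  · cases x <;> cases y <;> rfl

lemma delta_count_none (j : ℕ) :
    deltaD .count none (topsym [((Gam.Z), List.replicate j Gam.I)])
      = [(.count, .push2 [.I]), (.go, .push1 (List.replicate 8 .Lo))] := by
  cases j <;> rfl

lemma tauWord_append (x y : List OHCT) : tauWord (x ++ y) = tauWord x ++ tauWord y := by
  simp [tauWord]

@[simp] lemma tw_nil (j : ℕ) : tauWord^[j] [] = [] := by
  induction j with
  | zero => rfl
  | succ j ih => rw [Function.iterate_succ_apply]; simp [tauWord, ih]

lemma tw_iter_append (j : ℕ) (x y : List OHCT) :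
    tauWord^[j] (x ++ y) = tauWord^[j] x ++ tauWord^[j] y := by
  induction j generalizing x y with
  | zero => simp
  | succ j ih =>
      rw [Function.iterate_succ_apply, Function.iterate_succ_apply,
        Function.iterate_succ_apply, tauWord_append, ih]

lemma tw_iter_cons (j : ℕ) (c : OHCT) (v : List OHCT) :
    tauWord^[j] (c :: v) = tauWord^[j] [c] ++ tauWord^[j] v := by
  have h : (c :: v) = [c] ++ v := rfl
  rw [h, tw_iter_append]

lemma tw_iter_flatMap (j : ℕ) (v : List OHCT) :
    tauWord^[j] v = v.flatMap (fun c => tauWord^[j] [c]) := by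
  induction v with
  | nil => simp
  | cons c v ih => rw [List.flatMap_cons, ← ih, tw_iter_cons]

/-- Output of a store in state `go`. -/
def FD (ω : Store Gam) : List ohct :=
  ω.flatMap (fun e => ((tauWord^[e.2.length]) (goutG e.1)).map psi)

/-- The input word any accepting run starting from a given configuration must consume. -/
def OutD : St → Store Gam → List ohct
  | .go, ω => FD ω
  | .go2 _, [] => []
  | .go2 A, e :: rest => ((tauWord^[e.2.length]) (tauLetter A)).map psi ++ FD rest
  | .count, _ => []

@[simp] lemma goutG_liftG (c : OHCT) : goutG (liftG c) = [c] := by cases c <;> rfl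

lemma FD_append (x y : Store Gam) : FD (x ++ y) = FD x ++ FD y := by
  simp [FD]

lemma FD_map_lift (v : List OHCT) (s : List Gam) :
    FD (v.map (fun c => (liftG c, s))) = ((tauWord^[s.length]) v).map psi := by
  induction v with
  | nil => simp [FD]
  | cons c v ih =>
      rw [List.map_cons, FD, List.flatMap_cons, tw_iter_cons, List.map_append]
      simp only [goutG_liftG]
      rw [show ((List.map (fun c => (liftG c, s)) v).flatMap
        fun e => List.map psi (tauWord^[e.2.length] (goutG e.1))) =
        FD (v.map (fun c => (liftG c, s))) from rfl, ih]

lemma FD_replicate (n : ℕ) (s : List Gam) :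
    FD (List.replicate n (Gam.Lo, s)) =
      (List.replicate n ((tauWord^[s.length] [OHCT.O]).map psi)).flatten := by
  induction n with
  | zero => simp [FD]
  | succ n ih =>
      rw [List.replicate_succ, List.replicate_succ, List.flatten_cons, ← ih]
      rfl

/-- The target language word. -/
def targetD (k : ℕ) : List ohct :=
  (List.replicate 8 ((tauWord^[k] [OHCT.O]).map psi)).flatten

lemma FD_push8 (s : List Gam) :
    FD (List.map (fun x => (x, s)) (List.replicate 8 Gam.Lo) ++ []) = targetD s.length := by
  rw [List.append_nil, List.map_replicate, FD_replicate]
  rfl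

lemma sound_go (j : ℕ) :
    ∀ (v : List OHCT) (w : List ohct) (rest : Store Gam),
      MD.Steps (.go, ((tauWord^[j] v).map psi) ++ w,
          v.map (fun c => (liftG c, List.replicate j .I)) ++ rest)
        (.go, w, rest) := by
  induction j with
  | zero =>
      intro v
      induction v with
      | nil =>
          intro w rest
          simpa [IPDA2.Steps] using (Relation.ReflTransGen.refl :
            Relation.ReflTransGen MD.Step (.go, w, rest) (.go, w, rest))
      | cons A v ih =>
          intro w rest
          refine Relation.ReflTransGen.head
            (b := ((St.go : St), ((tauWord^[0] v).map psi) ++ w,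
              v.map (fun c => (liftG c, List.replicate 0 Gam.I)) ++ rest)) ?_ (ih w rest)
          have h0 : ((tauWord^[0] (A :: v)).map psi) ++ w
              = psi A :: (((tauWord^[0] v).map psi) ++ w) := by simp
          rw [h0]
          exact IPDA2.Step.read (op := Op.pop1)
            (by cases A <;> simp [MD, deltaD, liftG, psi]) (by simp [applyOp])
  | succ j ih =>
      intro v
      induction v with
      | nil =>
          intro w rest
          simpa [IPDA2.Steps] using (Relation.ReflTransGen.refl :
            Relation.ReflTransGen MD.Step (.go, w, rest) (.go, w, rest))
      | cons A v ihv =>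
          intro w rest
          have hsplit : tauWord^[j + 1] (A :: v)
              = tauWord^[j] (tauLetter A) ++ tauWord^[j + 1] v := by
            rw [tw_iter_cons, Function.iterate_succ_apply]
            congr 1
            simp [tauWord]
          set mid : Store Gam := v.map (fun c => (liftG c, List.replicate (j+1) Gam.I)) ++ rest
            with hmid
          refine Relation.ReflTransGen.head
            (b := ((St.go2 A : St), ((tauWord^[j+1] (A :: v)).map psi) ++ w,
              (liftG A, List.replicate j Gam.I) :: mid)) ?_ ?_
          · exact IPDA2.Step.eps (op := Op.pop2)
              (by cases A <;> simp [MD, deltaD, liftG, List.replicate_succ])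
              (by simp [applyOp, List.replicate_succ, hmid])
          · refine Relation.ReflTransGen.head
              (b := ((St.go : St), ((tauWord^[j+1] (A :: v)).map psi) ++ w,
                (tauLetter A).map (fun c => (liftG c, List.replicate j Gam.I)) ++ mid)) ?_ ?_
            · refine IPDA2.Step.eps (op := Op.push1 ((tauLetter A).map liftG))
                (by rw [show MD.δ = deltaD from rfl, delta_go2_none]; simp) ?_
              simp [applyOp, List.map_map, Function.comp]
            · rw [hsplit, List.map_append, List.append_assoc]
              exact Relation.ReflTransGen.trans
                (ih (tauLetter A) (((tauWord^[j+1] v).map psi) ++ w) mid)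
                (ihv w rest)

lemma sound_count (k : ℕ) (u : List ohct) :
    MD.Steps (.count, u, [(.Z, [])]) (.count, u, [(.Z, List.replicate k .I)]) := by
  induction k with
  | zero => exact Relation.ReflTransGen.refl
  | succ k ih =>
      refine Relation.ReflTransGen.tail ih ?_
      refine IPDA2.Step.eps (op := Op.push2 [Gam.I]) (q' := St.count) ?_ ?_
      · rw [show MD.δ = deltaD from rfl, delta_count_none]; simp
      · simp [applyOp, List.replicate_succ]

lemma sound_accept (k : ℕ) : MD.Accepts (targetD k) := by
  refine ⟨.go, ?_⟩
  refine Relation.ReflTransGen.trans (sound_count k _) ?_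
  refine Relation.ReflTransGen.head
    (b := ((St.go : St), targetD k,
      (List.replicate 8 Gam.Lo).map (fun x => (x, List.replicate k (Gam.I))))) ?_ ?_
  · exact IPDA2.Step.eps (op := Op.push1 (List.replicate 8 Gam.Lo)) (q' := St.go)
      (by rw [show MD.δ = deltaD from rfl, delta_count_none]; simp) (by simp [applyOp])
  · have h := sound_go k (List.replicate 8 .O) [] []
    have hm : (List.replicate 8 OHCT.O).map
        (fun c => (liftG c, List.replicate k (Gam.I)))
        = (List.replicate 8 Gam.Lo).map (fun x => (x, List.replicate k (Gam.I))) := by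
      simp [liftG]
    have ht : (tauWord^[k] (List.replicate 8 OHCT.O)).map psi = targetD k := by
      rw [tw_iter_flatMap, List.flatMap_replicate]
      simp [targetD, List.map_flatten]
    rw [hm, ht] at h
    simpa [IPDA2.Steps] using h

lemma complete_run :
    ∀ (q : St) (u : List ohct) (ω : Store Gam) (qf : St),
      MD.Steps (q, u, ω) (qf, [], []) →
      (q = .count → ∀ j, ω = [(.Z, List.replicate j .I)] → ∃ k, u = targetD k) ∧
      (q ≠ .count → u = OutD q ω) := by
  have main : ∀ (c fin : Config St ohct Gam), MD.Steps c fin → fin.2.1 = [] → fin.2.2 = [] →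
      (c.1 = .count → ∀ j, c.2.2 = [(.Z, List.replicate j .I)] → ∃ k, c.2.1 = targetD k) ∧
      (c.1 ≠ .count → c.2.1 = OutD c.1 c.2.2) := by
    intro c fin h
    induction h using Relation.ReflTransGen.head_induction_on with
    | refl =>
        intro h1 h2
        constructor
        · intro _ j hj; rw [h2] at hj; simp at hj
        · intro hq
          obtain ⟨qf, uf, ωf⟩ := fin
          simp only at h1 h2
          subst h1 h2
          cases qf <;> simp_all [OutD, FD]
    | head hstep hrest ih =>
        rename_i cfg cfg'
        intro h1 h2
        have IH := ih h1 h2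
        clear ih hrest h1 h2
        obtain ⟨q, u, ω⟩ := cfg
        obtain ⟨q2, u2, ω2⟩ := cfg'
        cases hstep with
        | eps hmem happ =>
            rename_i op
            constructor
            · rintro rfl j rfl
              simp only at *
              rw [show MD.δ = deltaD from rfl, delta_count_none, List.mem_cons,
                List.mem_singleton, Prod.mk.injEq, Prod.mk.injEq] at hmem
              rcases hmem with ⟨rfl, rfl⟩ | ⟨rfl, rfl⟩
              · simp only [applyOp, Option.some.injEq] at happ
                subst happ
                exact IH.1 rfl (j + 1) (by simp [List.replicate_succ])
              · simp only [applyOp, Option.some.injEq] at happ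
                subst happ
                have hout := IH.2 (by simp)
                refine ⟨j, ?_⟩
                rw [hout]
                simp only [OutD]
                rw [FD_push8]
                simp
            · intro hq
              simp only at *
              cases q with
              | count => exact absurd rfl hq
              | go =>
                  match ω with
                  | [] => simp [MD, deltaD] at hmem
                  | (A, []) :: rest =>
                      exfalso
                      cases A <;> simp [MD, deltaD] at hmem
                  | (A, x :: s) :: rest =>
                      cases A <;> cases x <;>
                        simp only [MD, deltaD, topsym_cons_cons, List.mem_cons,
                          List.mem_singleton, List.not_mem_nil, or_false,
                          Prod.mk.injEq] at hmem
                      all_goals (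
                        obtain ⟨rfl, rfl⟩ := hmem ;
                        simp only [applyOp, Option.some.injEq] at happ ;
                        subst happ ;
                        rw [IH.2 (by simp)] ;
                        rfl)
              | go2 A =>
                  match ω with
                  | [] =>
                      exfalso
                      cases op <;> simp [applyOp] at happ
                  | (B, s) :: rest =>
                      rw [show MD.δ = deltaD from rfl, delta_go2_none, List.mem_singleton,
                        Prod.mk.injEq] at hmem
                      obtain ⟨rfl, rfl⟩ := hmem
                      simp only [applyOp, Option.some.injEq] at happ
                      subst happ
                      rw [IH.2 (by simp)]
                      have hL : List.map (fun x => (x, s)) (List.map liftG (tauLetter A))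
                          = List.map (fun c => (liftG c, s)) (tauLetter A) := by
                        simp
                      show FD _ = _
                      rw [hL, FD_append, FD_map_lift]
                      rfl
        | read hmem happ =>
            rename_i a op
            constructor
            · rintro rfl j hω
              exfalso
              simp only at hω
              subst hω
              rw [show MD.δ = deltaD from rfl, delta_count_some] at hmem
              exact absurd hmem (by simp)
            · intro hq
              simp only at *
              cases q with
              | count =>
                  exact absurd rfl hq
              | go2 B =>
                  exfalso
                  rw [show MD.δ = deltaD from rfl, delta_go2_some] at hmem
                  exact absurd hmem (by simp)
              | go =>
                  match ω with
                  | [] => simp [MD, deltaD] at hmem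
                  | (A, x :: s) :: rest =>
                      exfalso
                      cases A <;> cases x <;> cases a <;>
                        simp [MD, deltaD] at hmem
                  | (A, []) :: rest =>
                      cases A <;> cases a <;>
                        simp only [MD, deltaD, topsym_cons_nil, List.mem_cons,
                          List.mem_singleton, List.not_mem_nil, or_false,
                          Prod.mk.injEq] at hmem
                      all_goals (
                        obtain ⟨rfl, rfl⟩ := hmem ;
                        simp only [applyOp, Option.some.injEq] at happ ;
                        subst happ ;
                        rw [IH.2 (by simp)] ;
                        rfl)
  intro q u ω qf h
  exact main (q, u, ω) (qf, [], []) h rfl rfl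

end DodecaAux



/-- There exists a 2-iterated pushdown automaton with input alphabet `{o, h, c, t}` that
accepts a word `u` if and only if `u = (ψ(τ^k(O)))^8` for some `k : ℕ` — exactly the
contour words of the balls of the dodecagrid, the tiling `{5,3,4}` of hyperbolic
3-space, which splits into 8 sectors around its central point, each spanned by the tree
generated from a root labelled `O` by the rules `τ`. -/
theorem exists_ipda2_dodecagrid_ball_contours :
    ∃ (Q Γ : Type) (_ : Fintype Q) (_ : Fintype Γ) (M : IPDA2 Q ohct Γ),
      ∀ u : List ohct,
        M.Accepts u ↔
          ∃ k : ℕ, u = (List.replicate 8 ((tauWord^[k] [OHCT.O]).map psi)).flatten := by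
  refine ⟨St, Gam, inferInstance, inferInstance, MD, fun u => ⟨?_, ?_⟩⟩
  · rintro ⟨qf, h⟩
    exact (complete_run .count u [(.Z, [])] qf h).1 rfl 0 (by simp)
  · rintro ⟨k, rfl⟩
    exact sound_accept k
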